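/- arXiv:2006.14835 — 5 statements merged into one kernel-verified Lean document; each statement's English description precedes it below -/
import Mathlib

section
/- Let A ∈ ℝ^{M×N} and S ⊂ [N]. If there exists ν ∈ ℝ^M and t > 0 such that (A*ν)_i ≤ -t for all i ∈ S and (A*ν)_i ≥ t for all i ∉ S, then the set {x ∈ [0,1]^N : Ax = A·1_S} equals {1_S}, where 1_S denotes the indicator vector of S. -/
open Finset Matrix

theorem dual_certificate_implies_unique {M N : ℕ} (A : Matrix (Fin M) (Fin N) ℝ)
    (S : Finset (Fin N)) (ν : Fin M → ℝ) (t : ℝ) (ht : 0 < t)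
    (hS : ∀ i ∈ S, A.transpose.mulVec ν i ≤ -t)
    (hSc : ∀ i ∉ S, t ≤ A.transpose.mulVec ν i) :
    {x : Fin N → ℝ | (∀ i, x i ∈ Set.Icc (0:ℝ) 1) ∧
        A.mulVec x = A.mulVec (fun i => if i ∈ S then (1:ℝ) else 0)}
      = {fun i => if i ∈ S then (1:ℝ) else 0} := by
  set s : Fin N → ℝ := fun i => if i ∈ S then (1:ℝ) else 0 with hs
  set g : Fin N → ℝ := A.transpose.mulVec ν with hg
  ext x
  simp only [Set.mem_setOf_eq, Set.mem_singleton_iff]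
  constructor
  · rintro ⟨hbox, heq⟩
    have hdot : g ⬝ᵥ x = g ⬝ᵥ s := by
      have h1 : ν ⬝ᵥ A.mulVec x = ν ⬝ᵥ A.mulVec s := by rw [heq]
      rwa [Matrix.dotProduct_mulVec, Matrix.dotProduct_mulVec,
        ← Matrix.mulVec_transpose] at h1
    have hsum : ∑ i, g i * (x i - s i) = 0 := by
      have : ∑ i, g i * (x i - s i) = g ⬝ᵥ x - g ⬝ᵥ s := by
        simp [dotProduct, mul_sub, Finset.sum_sub_distrib]
      rw [this, hdot, sub_self]
    have hnn : ∀ i ∈ Finset.univ, 0 ≤ g i * (x i - s i) := by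
      intro i _
      by_cases hi : i ∈ S
      · have h1 : x i ≤ 1 := (hbox i).2
        have : s i = 1 := by simp [hs, hi]
        rw [this]
        have := hS i hi
        nlinarith
      · have h0 : 0 ≤ x i := (hbox i).1
        have : s i = 0 := by simp [hs, hi]
        rw [this]
        have := hSc i hi
        nlinarith
    have hzero := (Finset.sum_eq_zero_iff_of_nonneg hnn).mp hsum
    funext i
    have hz := hzero i (Finset.mem_univ i)
    by_cases hi : i ∈ S
    · have h1 : x i ≤ 1 := (hbox i).2
      have hsi : s i = 1 := by simp [hs, hi]
      rw [hsi] at hz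
      have := hS i hi
      have : x i = 1 := by nlinarith
      simpa [hs, hi] using this
    · have h0 : 0 ≤ x i := (hbox i).1
      have hsi : s i = 0 := by simp [hs, hi]
      rw [hsi] at hz
      have := hSc i hi
      have : x i = 0 := by nlinarith
      simpa [hs, hi] using this
  · rintro rfl
    exact ⟨fun i => by by_cases hi : i ∈ S <;> simp [hs, hi], rfl⟩
end

section
/- Let A ∈ ℝ^{M×N} and S ⊂ [N]. Then ker(A) ∩ H_S^0 = {0} if and only if {x ∈ [0,1]^N : Ax = A·1_S} = {1_S}, where H_S^0 = {w ∈ ℝ^N : w_i ≤ 0 for i ∈ S, w_i ≥ 0 for i ∉ S}. -/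
open Finset

theorem kernel_condition_iff_unique {M N : ℕ} (A : Matrix (Fin M) (Fin N) ℝ)
    (S : Finset (Fin N)) :
    (∀ w : Fin N → ℝ, A.mulVec w = 0 → (∀ i ∈ S, w i ≤ 0) → (∀ i ∉ S, 0 ≤ w i) → w = 0)
      ↔ {x : Fin N → ℝ | (∀ i, x i ∈ Set.Icc (0:ℝ) 1) ∧
            A.mulVec x = A.mulVec (fun i => if i ∈ S then (1:ℝ) else 0)}
          = {fun i => if i ∈ S then (1:ℝ) else 0} := by
  set e : Fin N → ℝ := fun i => if i ∈ S then (1:ℝ) else 0 with he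
  constructor
  · intro h
    apply Set.eq_singleton_iff_unique_mem.mpr
    constructor
    · refine ⟨fun i => ?_, rfl⟩
      by_cases hi : i ∈ S <;> simp [e, hi]
    · rintro x ⟨hx, hAx⟩
      have hw : (x - e) = 0 := by
        apply h
        · rw [Matrix.mulVec_sub, hAx, sub_self]
        · intro i hi
          have := (hx i).2
          simp [e, hi]
          linarith
        · intro i hi
          have := (hx i).1
          simp [e, hi]
          linarith
      have := sub_eq_zero.mp hw
      exact this
  · intro h w hAw hS hSc
    by_contra hne
    set c : ℝ := (1 + ∑ i, |w i|)⁻¹ with hc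
    have hsum : (0:ℝ) ≤ ∑ i, |w i| := Finset.sum_nonneg (fun i _ => abs_nonneg _)
    have hcpos : 0 < c := by positivity
    have hbound : ∀ i, c * |w i| ≤ 1 := by
      intro i
      rw [hc, inv_mul_le_iff₀ (by positivity), mul_one]
      have : |w i| ≤ ∑ j, |w j| := Finset.single_le_sum (f := fun j => |w j|) (fun j _ => abs_nonneg _) (mem_univ i)
      linarith
    have hx : (fun i => e i + c * w i) ∈ {x : Fin N → ℝ | (∀ i, x i ∈ Set.Icc (0:ℝ) 1) ∧
            A.mulVec x = A.mulVec e} := by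
      constructor
      · intro i
        by_cases hi : i ∈ S
        · have h1 := hS i hi
          have h2 := hbound i
          rw [abs_of_nonpos h1] at h2
          constructor <;> simp [e, hi] <;> nlinarith
        · have h1 := hSc i hi
          have h2 := hbound i
          rw [abs_of_nonneg h1] at h2
          constructor <;> simp [e, hi] <;> nlinarith
      · have : (fun i => e i + c * w i) = e + c • w := by
          funext i; simp [mul_comm]
        rw [this, Matrix.mulVec_add, Matrix.mulVec_smul, hAw, smul_zero, add_zero]
    rw [h] at hx
    apply hne
    funext i
    have := congrFun hx i
    have this : e i + c * w i = e i := this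
    have : c * w i = 0 := by linarith [this]
    have := mul_eq_zero.mp this
    rcases this with h1 | h1
    · exact absurd h1 (ne_of_gt hcpos)
    · exact h1
end

section
/- Let r, t, η > 0, S ⊂ [N], A ∈ ℝ^{M×N}. Suppose there exists ν ∈ ℝ^M with ‖ν‖₂ ≤ r such that (A*ν)_i ≤ -t for i ∈ S and (A*ν)_i ≥ t for i ∉ S. Let x₀ = 1_S and y = Ax₀ + n with ‖n‖₂ ≤ η. Then any minimizer x* of ‖Ax - y‖₂ over x ∈ [0,1]^N satisfies ‖x* - x₀‖₂ ≤ (2r/t)·η. -/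
open Finset

/-- Euclidean norm of a finite real vector. -/
noncomputable def eucNorm {n : ℕ} (v : Fin n → ℝ) : ℝ :=
  Real.sqrt (∑ i, (v i) ^ 2)

lemma eucNorm_nonneg {n : ℕ} (v : Fin n → ℝ) : 0 ≤ eucNorm v :=
  Real.sqrt_nonneg _

lemma cs {m : ℕ} (f g : Fin m → ℝ) : ∑ i, f i * g i ≤ eucNorm f * eucNorm g :=
  Real.sum_mul_le_sqrt_mul_sqrt _ _ _

lemma eucNorm_add_le {m : ℕ} (f g : Fin m → ℝ) :
    eucNorm (f + g) ≤ eucNorm f + eucNorm g := by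
  have h1 : ∑ i, (f i + g i) ^ 2 ≤ (eucNorm f + eucNorm g) ^ 2 := by
    have hcs := cs f g
    have hf : Real.sqrt (∑ i, f i ^ 2) ^ 2 = ∑ i, f i ^ 2 :=
      Real.sq_sqrt (Finset.sum_nonneg fun i _ => sq_nonneg _)
    have hg : Real.sqrt (∑ i, g i ^ 2) ^ 2 = ∑ i, g i ^ 2 :=
      Real.sq_sqrt (Finset.sum_nonneg fun i _ => sq_nonneg _)
    calc ∑ i, (f i + g i) ^ 2 = ∑ i, f i ^ 2 + 2 * ∑ i, f i * g i + ∑ i, g i ^ 2 := by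
          have he : ∀ i : Fin m, (f i + g i) ^ 2 = f i ^ 2 + 2 * (f i * g i) + g i ^ 2 :=
            fun i => by ring
          simp_rw [he, Finset.sum_add_distrib, ← Finset.mul_sum]
      _ ≤ ∑ i, f i ^ 2 + 2 * (eucNorm f * eucNorm g) + ∑ i, g i ^ 2 := by nlinarith
      _ = (eucNorm f + eucNorm g) ^ 2 := by
          unfold eucNorm; nlinarith [hf, hg]
  calc eucNorm (f + g) = Real.sqrt (∑ i, (f i + g i) ^ 2) := rfl
    _ ≤ Real.sqrt ((eucNorm f + eucNorm g) ^ 2) := Real.sqrt_le_sqrt h1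
    _ = eucNorm f + eucNorm g := Real.sqrt_sq (add_nonneg (eucNorm_nonneg f) (eucNorm_nonneg g))

lemma eucNorm_le_sum_abs {m : ℕ} (f : Fin m → ℝ) :
    eucNorm f ≤ ∑ i, |f i| := by
  have h1 : ∑ i, f i ^ 2 ≤ (∑ i, |f i|) ^ 2 := by
    calc ∑ i, f i ^ 2 = ∑ i, |f i| ^ 2 := by simp [sq_abs]
      _ ≤ (∑ i, |f i|) ^ 2 := Finset.sum_sq_le_sq_sum_of_nonneg fun i _ => abs_nonneg _
  calc eucNorm f ≤ Real.sqrt ((∑ i, |f i|) ^ 2) := Real.sqrt_le_sqrt h1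
    _ = ∑ i, |f i| := Real.sqrt_sq (Finset.sum_nonneg fun i _ => abs_nonneg _)

theorem noisy_recovery {M N : ℕ} (A : Matrix (Fin M) (Fin N) ℝ) (S : Finset (Fin N))
    (r t η : ℝ) (hr : 0 < r) (ht : 0 < t) (hη : 0 < η)
    (ν : Fin M → ℝ) (hν : eucNorm ν ≤ r)
    (hS : ∀ i ∈ S, A.transpose.mulVec ν i ≤ -t)
    (hSc : ∀ i ∉ S, t ≤ A.transpose.mulVec ν i)
    (x₀ : Fin N → ℝ) (hx₀ : x₀ = fun i => if i ∈ S then (1:ℝ) else 0)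
    (n : Fin M → ℝ) (hn : eucNorm n ≤ η)
    (y : Fin M → ℝ) (hy : y = A.mulVec x₀ + n)
    (xstar : Fin N → ℝ) (hbox : ∀ i, xstar i ∈ Set.Icc (0:ℝ) 1)
    (hmin : ∀ x : Fin N → ℝ, (∀ i, x i ∈ Set.Icc (0:ℝ) 1) →
      eucNorm (A.mulVec xstar - y) ≤ eucNorm (A.mulVec x - y)) :
    eucNorm (xstar - x₀) ≤ (2 * r / t) * η := by
  set h := xstar - x₀ with hh
  -- x₀ is in the box
  have hx₀box : ∀ i, x₀ i ∈ Set.Icc (0:ℝ) 1 := by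
    intro i; rw [hx₀]; by_cases hi : i ∈ S <;> simp [hi]
  -- residual bound
  have hres : eucNorm (A.mulVec xstar - y) ≤ η := by
    have h1 := hmin x₀ hx₀box
    have hAx₀ : A.mulVec x₀ - y = -n := by rw [hy]; ring_nf
    rw [hAx₀] at h1
    have h2 : eucNorm (-n) = eucNorm n := by unfold eucNorm; simp
    rw [h2] at h1
    exact h1.trans hn
  -- A h = (A xstar - y) + n
  have hAh : A.mulVec h = (A.mulVec xstar - y) + n := by
    rw [hh, Matrix.mulVec_sub, hy]; ring_nf
  have hAhbd : eucNorm (A.mulVec h) ≤ 2 * η := by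
    rw [hAh]
    calc eucNorm ((A.mulVec xstar - y) + n) ≤ eucNorm (A.mulVec xstar - y) + eucNorm n :=
          eucNorm_add_le _ _
      _ ≤ η + η := add_le_add hres hn
      _ = 2 * η := by ring
  -- sign conditions
  have hsign : ∀ i, t * |h i| ≤ A.transpose.mulVec ν i * h i := by
    intro i
    by_cases hi : i ∈ S
    · have h1 : h i ≤ 0 := by
        have := (hbox i).2
        simp [hh, hx₀, hi]; linarith
      have h2 := hS i hi
      rw [abs_of_nonpos h1]
      nlinarith
    · have h1 : 0 ≤ h i := by
        have := (hbox i).1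
        simp [hh, hx₀, hi]; linarith
      have h2 := hSc i hi
      rw [abs_of_nonneg h1]
      nlinarith
  -- key chain
  have hdot : ∑ i, A.transpose.mulVec ν i * h i = ∑ j, ν j * A.mulVec h j := by
    have : dotProduct (A.transpose.mulVec ν) h = dotProduct ν (A.mulVec h) := by
      rw [Matrix.mulVec_transpose, Matrix.dotProduct_mulVec]
    simpa [dotProduct] using this
  have hkey : t * eucNorm h ≤ 2 * r * η := by
    calc t * eucNorm h ≤ t * ∑ i, |h i| := by
          have := eucNorm_le_sum_abs h
          nlinarith
      _ = ∑ i, t * |h i| := Finset.mul_sum _ _ _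
      _ ≤ ∑ i, A.transpose.mulVec ν i * h i := Finset.sum_le_sum fun i _ => hsign i
      _ = ∑ j, ν j * A.mulVec h j := hdot
      _ ≤ eucNorm ν * eucNorm (A.mulVec h) := cs _ _
      _ ≤ r * (2 * η) := by
          have h1 := eucNorm_nonneg (A.mulVec h)
          have h2 := eucNorm_nonneg ν
          nlinarith
      _ = 2 * r * η := by ring
  rw [div_mul_eq_mul_div, le_div_iff₀ ht, mul_comm]
  exact hkey
end

section
/- Let b be a random vector with independent mean-zero entries with E[b_i²] = σ², Φ its N×N circulant matrix, Θ ⊂ [N] with |Θ| = M, and Φ_Θ the rows of Φ indexed by Θ. Define X₃(i) = ⟨Φ_Θ 1_S, 1⟩·⟨1, Φ_Θ e_i⟩, where 1 ∈ ℝ^M is the all-ones vector. Then E[X₃(i)] = σ² ∑_{k ∈ S} |Θ ∩ ((k - i) + Θ)|, where addition is modulo N; in particular 0 ≤ E[X₃(i)] ≤ s M σ² for all i, and E[X₃(i)] ≥ M σ² when i ∈ S. -/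
open Finset MeasureTheory ProbabilityTheory

theorem expectation_X3 {N : ℕ} [NeZero N]
    {Ω : Type*} [MeasureSpace Ω] (μ : Measure Ω) [IsProbabilityMeasure μ]
    (b : ZMod N → Ω → ℝ) (σ : ℝ) (hσ : 0 < σ)
    (hmeas : ∀ i, Measurable (b i))
    (hL2 : ∀ i, MemLp (b i) 2 μ)
    (hindep : iIndepFun (m := fun _ => Real.measurableSpace) b μ)
    (hmean : ∀ i, ∫ ω, b i ω ∂μ = 0)
    (hvar : ∀ i, ∫ ω, (b i ω) ^ 2 ∂μ = σ ^ 2)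
    (Θ S : Finset (ZMod N)) (M s : ℕ) (hΘ : Θ.card = M) (hS : S.card = s)
    (i : ZMod N)
    (X₃ : ℝ)
    (hX₃ : X₃ = ∫ ω, ((∑ m ∈ Θ, ∑ k ∈ S, b (k - m) ω) * (∑ l ∈ Θ, b (i - l) ω)) ∂μ) :
    X₃ = σ ^ 2 * ∑ k ∈ S, ((Θ ∩ (Θ.image ((k - i) + ·))).card : ℝ) ∧
      0 ≤ X₃ ∧ X₃ ≤ (s : ℝ) * M * σ ^ 2 ∧ (i ∈ S → (M : ℝ) * σ ^ 2 ≤ X₃) := by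
  have hInt : ∀ a, Integrable (b a) μ := fun a => (hL2 a).integrable one_le_two
  have hIntMul : ∀ a c, Integrable (fun ω => b a ω * b c ω) μ := by
    intro a c
    have h1 : MemLp (b a • b c) 1 μ :=
      (hL2 c).smul (hL2 a)
    have := memLp_one_iff_integrable.mp h1
    exact this
  have hcov : ∀ a c : ZMod N, (∫ ω, b a ω * b c ω ∂μ) = if a = c then σ ^ 2 else 0 := by
    intro a c
    by_cases h : a = c
    · subst h
      rw [if_pos rfl]
      simpa [sq] using hvar a
    · rw [if_neg h]
      have := (hindep.indepFun h).integral_mul_eq_mul_integral (hInt a).aestronglyMeasurable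
        (hInt c).aestronglyMeasurable
      have h2 : (fun ω => b a ω * b c ω) = b a * b c := rfl
      rw [h2, this, hmean a, hmean c, mul_zero]
  have key : X₃ = ∑ m ∈ Θ, ∑ k ∈ S, ∑ l ∈ Θ,
      (if (k - m : ZMod N) = i - l then σ ^ 2 else 0) := by
    rw [hX₃]
    have : (fun ω => (∑ m ∈ Θ, ∑ k ∈ S, b (k - m) ω) * (∑ l ∈ Θ, b (i - l) ω))
        = fun ω => ∑ m ∈ Θ, ∑ k ∈ S, ∑ l ∈ Θ, b (k - m) ω * b (i - l) ω := by
      funext ω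
      simp_rw [Finset.sum_mul, Finset.mul_sum]
    rw [this, integral_finset_sum _ (fun m _ => integrable_finset_sum _
      (fun k _ => integrable_finset_sum _ (fun l _ => hIntMul _ _)))]
    refine Finset.sum_congr rfl fun m _ => ?_
    rw [integral_finset_sum _ (fun k _ => integrable_finset_sum _ (fun l _ => hIntMul _ _))]
    refine Finset.sum_congr rfl fun k _ => ?_
    rw [integral_finset_sum _ (fun l _ => hIntMul _ _)]
    exact Finset.sum_congr rfl fun l _ => hcov _ _
  have hfilter : ∀ k : ZMod N,
      (Θ ∩ (Θ.image ((k - i) + ·))) = Θ.filter (fun m => i - k + m ∈ Θ) := by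
    intro k
    ext t
    simp only [Finset.mem_inter, Finset.mem_image, Finset.mem_filter]
    constructor
    · rintro ⟨ht, m, hm, rfl⟩
      refine ⟨ht, ?_⟩
      have : i - k + (k - i + m) = m := by ring
      rwa [this]
    · rintro ⟨ht, hm⟩
      exact ⟨ht, i - k + t, hm, by ring⟩
  have hmain : X₃ = σ ^ 2 * ∑ k ∈ S, ((Θ ∩ (Θ.image ((k - i) + ·))).card : ℝ) := by
    rw [key, Finset.sum_comm, Finset.mul_sum]
    refine Finset.sum_congr rfl fun k _ => ?_
    have inner : ∀ m : ZMod N, (∑ l ∈ Θ, if (k - m : ZMod N) = i - l then σ ^ 2 else 0)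
        = if (i - k + m : ZMod N) ∈ Θ then σ ^ 2 else 0 := by
      intro m
      have hc : ∀ l : ZMod N, ((k - m : ZMod N) = i - l) ↔ (l = i - k + m) := by
        intro l
        constructor <;> intro h <;> linear_combination h
      simp_rw [hc]
      exact Finset.sum_ite_eq' Θ _ (fun _ => σ ^ 2)
    simp_rw [inner]
    rw [hfilter k, ← Finset.sum_filter, Finset.sum_const, nsmul_eq_mul, mul_comm]
  refine ⟨hmain, ?_, ?_, ?_⟩
  · rw [hmain]
    positivity
  · rw [hmain]
    have hb : (∑ k ∈ S, ((Θ ∩ (Θ.image ((k - i) + ·))).card : ℝ)) ≤ (s : ℝ) * M := by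
      calc (∑ k ∈ S, ((Θ ∩ (Θ.image ((k - i) + ·))).card : ℝ))
          ≤ ∑ k ∈ S, (M : ℝ) := by
            refine Finset.sum_le_sum fun k _ => ?_
            exact_mod_cast hΘ ▸ Finset.card_le_card (Finset.inter_subset_left)
        _ = (s : ℝ) * M := by rw [Finset.sum_const, hS, nsmul_eq_mul]
    calc σ ^ 2 * ∑ k ∈ S, ((Θ ∩ (Θ.image ((k - i) + ·))).card : ℝ)
        ≤ σ ^ 2 * ((s : ℝ) * M) := by
          exact mul_le_mul_of_nonneg_left hb (sq_nonneg σ)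
      _ = (s : ℝ) * M * σ ^ 2 := by ring
  · intro hi
    rw [hmain]
    have hterm : ((Θ ∩ (Θ.image ((i - i) + ·))).card : ℝ) = M := by
      simp [sub_self, hΘ]
    have : (M : ℝ) ≤ ∑ k ∈ S, ((Θ ∩ (Θ.image ((k - i) + ·))).card : ℝ) := by
      rw [← hterm]
      exact Finset.single_le_sum
        (f := fun k => ((Θ ∩ (Θ.image ((k - i) + ·))).card : ℝ))
        (fun k _ => by positivity) hi
    calc (M : ℝ) * σ ^ 2 = σ ^ 2 * M := by ring
      _ ≤ σ ^ 2 * ∑ k ∈ S, ((Θ ∩ (Θ.image ((k - i) + ·))).card : ℝ) :=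
          mul_le_mul_of_nonneg_left this (sq_nonneg σ)
end

section
/- Let A ∈ ℝ^{M×N}, S ⊂ [N], and suppose ker(A) ∩ H_S^0 = {0}, where H_S^0 = {w ∈ ℝ^N : w_i ≤ 0 for i ∈ S, w_i ≥ 0 for i ∉ S}. Then both 1_S and 1 - 1_S = 1_{S^c} are the unique solutions of their respective box-constrained basis pursuit problems: 1_S uniquely minimizes ‖x‖₁ subject to Ax = A·1_S and x ∈ [0,1]^N, and 1_{S^c} uniquely minimizes ‖x‖₁ subject to Ax = A·1_{S^c} and x ∈ [0,1]^N. -/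
open Finset

theorem kernel_condition_implies_bp_unique {M N : ℕ} (A : Matrix (Fin M) (Fin N) ℝ)
    (S : Finset (Fin N))
    (hker : ∀ w : Fin N → ℝ, A.mulVec w = 0 →
      (∀ i ∈ S, w i ≤ 0) → (∀ i ∉ S, 0 ≤ w i) → w = 0) :
    (∀ x : Fin N → ℝ, (∀ i, x i ∈ Set.Icc (0:ℝ) 1) →
        A.mulVec x = A.mulVec (fun i => if i ∈ S then (1:ℝ) else 0) →
        x ≠ (fun i => if i ∈ S then (1:ℝ) else 0) →
        ∑ i, |(fun i => if i ∈ S then (1:ℝ) else 0) i| < ∑ i, |x i|) ∧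
      (∀ x : Fin N → ℝ, (∀ i, x i ∈ Set.Icc (0:ℝ) 1) →
        A.mulVec x = A.mulVec (fun i => if i ∈ S then (0:ℝ) else 1) →
        x ≠ (fun i => if i ∈ S then (0:ℝ) else 1) →
        ∑ i, |(fun i => if i ∈ S then (0:ℝ) else 1) i| < ∑ i, |x i|) := by
  constructor
  · intro x hbox hAx hne
    exfalso
    apply hne
    set u : Fin N → ℝ := fun i => if i ∈ S then (1:ℝ) else 0 with hu
    have hw : A.mulVec (x - u) = 0 := by
      rw [Matrix.mulVec_sub, hAx, sub_self]
    have h := hker (x - u) hw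
      (fun i hi => by
        simp only [Pi.sub_apply, hu, if_pos hi]
        linarith [(hbox i).2])
      (fun i hi => by
        simp only [Pi.sub_apply, hu, if_neg hi]
        linarith [(hbox i).1])
    have : x - u = 0 := h
    funext i
    have := congrFun this i
    simp only [Pi.sub_apply, Pi.zero_apply] at this
    linarith
  · intro x hbox hAx hne
    exfalso
    apply hne
    set u : Fin N → ℝ := fun i => if i ∈ S then (0:ℝ) else 1 with hu
    have hw : A.mulVec (u - x) = 0 := by
      rw [Matrix.mulVec_sub, hAx, sub_self]
    have h := hker (u - x) hw
      (fun i hi => by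
        simp only [Pi.sub_apply, hu, if_pos hi]
        linarith [(hbox i).1])
      (fun i hi => by
        simp only [Pi.sub_apply, hu, if_neg hi]
        linarith [(hbox i).2])
    have : u - x = 0 := h
    funext i
    have := congrFun this i
    simp only [Pi.sub_apply, Pi.zero_apply] at this
    linarith
end
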